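/- For every f ∈ C_c(W), the linear representation f̂ : μ ↦ ∫ f dμ is a continuous real-valued function on (M^∞, OT_∞); that is, if OT_∞(μ_n, μ) → 0 then ∫ f dμ_n → ∫ f dμ. -/

import Mathlib

/-! Common setup: the birth-death plane, Radon measures, partial optimal transport. -/

noncomputable section

open MeasureTheory Topology Filter Set
open scoped ENNReal

/-- The ambient plane `ℝ²` (with the sup-norm, i.e. `q = ∞`). -/
abbrev P2 : Type := ℝ × ℝ

/-- The birth-death plane `W = {(b,d) : b < d}`. -/
def Wbd : Set P2 := {p | p.1 < p.2}

/-- The closure `W̄` of the birth-death plane. -/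
def Wcl : Set P2 := closure Wbd

/-- The diagonal `Δ`. -/
def Diag : Set P2 := {p | p.1 = p.2}

/-- Distance from a point to the diagonal, `‖x - Δ‖`. -/
def distDiag (x : P2) : ℝ := Metric.infDist x Diag

/-- The pseudometric `d(x,y) = min(‖x-y‖, ‖x-Δ‖ + ‖y-Δ‖)` on `W̄`. -/
def dW (x y : P2) : ℝ := min (dist x y) (distDiag x + distDiag y)

/-- The support of a Borel measure: points all of whose neighborhoods have
positive measure. -/
def msupport {α : Type*} [TopologicalSpace α] [MeasurableSpace α] (μ : Measure α) : Set α :=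
  {x | ∀ U ∈ 𝓝 x, 0 < μ U}

/-- `μ` is a Radon measure on the subspace `S`: it vanishes off `S`, is inner regular
(on relatively open sets) by compact sets, outer regular (by relatively open sets), and finite
on compact subsets of `S`. -/
def RadonOn {α : Type*} [TopologicalSpace α] [MeasurableSpace α] (S : Set α)
    (μ : Measure α) : Prop :=
  μ Sᶜ = 0 ∧
  (∀ U : Set α, IsOpen U → μ (U ∩ S) = ⨆ (K : Set α) (_ : K ⊆ U ∩ S) (_ : IsCompact K), μ K) ∧
  (∀ E : Set α, E ⊆ S → MeasurableSet E →
    μ E = ⨅ (U : Set α) (_ : IsOpen U) (_ : E ⊆ U), μ (U ∩ S)) ∧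
  (∀ K : Set α, K ⊆ S → IsCompact K → μ K < ⊤)

/-- The set `M` of Radon measures on `W`. -/
def MRadon : Set (Measure P2) := {μ | RadonOn Wbd μ}

/-- `pers_∞(μ) = sup{‖x-Δ‖ : x ∈ spt μ}` (valued in `ℝ≥0∞`). -/
def persInf (μ : Measure P2) : ℝ≥0∞ := ⨆ x ∈ msupport μ, ENNReal.ofReal (distDiag x)

/-- The space `M^∞` of Radon measures on `W` with finite `∞`-persistence. -/
def MInf : Set (Measure P2) := {μ | RadonOn Wbd μ ∧ persInf μ < ⊤}

/-- A coupling (admissible transport plan) between `μ` and `ν`: a Radon measure on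
`W̄ × W̄` whose marginals restricted to Borel subsets of `W` are `μ` and `ν`. -/
def IsCoupling (π : Measure (P2 × P2)) (μ ν : Measure P2) : Prop :=
  RadonOn (Wcl ×ˢ Wcl) π ∧
  (∀ A : Set P2, A ⊆ Wbd → MeasurableSet A → π (A ×ˢ Wcl) = μ A) ∧
  (∀ B : Set P2, B ⊆ Wbd → MeasurableSet B → π (Wcl ×ˢ B) = ν B)

/-- The `∞`-cost of a transport plan: `sup {d(x,y) : (x,y) ∈ spt π}`. -/
def costInf (π : Measure (P2 × P2)) : ℝ≥0∞ :=
  ⨆ p ∈ msupport π, ENNReal.ofReal (dW p.1 p.2)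

/-- The partial `∞`-optimal transport distance. -/
def OT (μ ν : Measure P2) : ℝ≥0∞ :=
  ⨅ (π : Measure (P2 × P2)) (_ : IsCoupling π μ ν), costInf π

/-- `W_ε = {(x,y) : y - x > ε}`. -/
def Weps (ε : ℝ) : Set P2 := {p | p.2 - p.1 > ε}

/-- The space `M_f^∞` of off-diagonally finite measures. -/
def Mf : Set (Measure P2) := {μ | μ ∈ MInf ∧ ∀ ε : ℝ, 0 < ε → μ (Weps ε) < ⊤}

/-- The space `M_fin^∞` of finite measures in `M^∞`. -/
def Mfin : Set (Measure P2) := {μ | μ ∈ MInf ∧ μ Wbd < ⊤}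

/-- `f ∈ C_c(W)`: a continuous function, compactly supported, with support contained
in the open set `W` (extended by zero to the plane). -/
def IsCcW (f : P2 → ℝ) : Prop :=
  Continuous f ∧ HasCompactSupport f ∧ tsupport f ⊆ Wbd

/-- Convergence of a sequence of measures to `μ` in the distance `OT_∞`. -/
def OTConv (u : ℕ → Measure P2) (μ : Measure P2) : Prop :=
  Tendsto (fun n => OT (u n) μ) atTop (𝓝 0)


/-! ### Auxiliary lemmas -/

lemma isOpen_Wbd : IsOpen Wbd := isOpen_lt continuous_fst continuous_snd

/-- In a second-countable space, the complement of the support of a measure is null. -/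
lemma measure_compl_msupport {α : Type*} [TopologicalSpace α] [MeasurableSpace α]
    [SecondCountableTopology α] (μ : Measure α) :
    μ (msupport μ)ᶜ = 0 := by
  set S : Set (Set α) := {U | IsOpen U ∧ μ U = 0} with hS
  obtain ⟨T, hTc, hTS, hTU⟩ := TopologicalSpace.isOpen_sUnion_countable S (fun U hU => hU.1)
  have hsub : (msupport μ)ᶜ ⊆ ⋃₀ S := by
    intro x hx
    simp only [msupport, mem_compl_iff, mem_setOf_eq, not_forall] at hx
    obtain ⟨U, hU, hU0⟩ := hx
    have hU0' : μ U = 0 := le_antisymm (not_lt.1 hU0) zero_le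
    refine ⟨interior U, ⟨isOpen_interior, le_antisymm ?_ zero_le⟩,
      mem_interior_iff_mem_nhds.2 hU⟩
    calc μ (interior U) ≤ μ U := measure_mono interior_subset
      _ = 0 := hU0'
  refine measure_mono_null hsub ?_
  rw [← hTU]
  exact (measure_sUnion_null_iff hTc).2 fun s hs => (hTS hs).2

lemma measure_prod_univ_fst (π : Measure (P2 × P2)) (h0 : π ((Wcl ×ˢ Wcl)ᶜ) = 0) (s : Set P2) :
    π (s ×ˢ (univ : Set P2)) = π (s ×ˢ Wcl) := by
  refine le_antisymm ?_ (measure_mono (Set.prod_mono_right (subset_univ _)))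
  have hsub : s ×ˢ (univ : Set P2) ⊆ s ×ˢ Wcl ∪ (Wcl ×ˢ Wcl)ᶜ := by
    rintro ⟨a, b⟩ ⟨ha, -⟩
    by_cases hb : b ∈ Wcl
    · exact Or.inl ⟨ha, hb⟩
    · exact Or.inr fun hc => hb hc.2
  calc π (s ×ˢ (univ : Set P2)) ≤ π (s ×ˢ Wcl ∪ (Wcl ×ˢ Wcl)ᶜ) := measure_mono hsub
    _ ≤ π (s ×ˢ Wcl) + π ((Wcl ×ˢ Wcl)ᶜ) := measure_union_le _ _
    _ = π (s ×ˢ Wcl) := by rw [h0, add_zero]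

lemma measure_univ_prod_snd (π : Measure (P2 × P2)) (h0 : π ((Wcl ×ˢ Wcl)ᶜ) = 0) (s : Set P2) :
    π ((univ : Set P2) ×ˢ s) = π (Wcl ×ˢ s) := by
  refine le_antisymm ?_ (measure_mono (Set.prod_mono_left (subset_univ _)))
  have hsub : (univ : Set P2) ×ˢ s ⊆ Wcl ×ˢ s ∪ (Wcl ×ˢ Wcl)ᶜ := by
    rintro ⟨a, b⟩ ⟨-, hb⟩
    by_cases ha : a ∈ Wcl
    · exact Or.inl ⟨ha, hb⟩
    · exact Or.inr fun hc => ha hc.1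
  calc π ((univ : Set P2) ×ˢ s) ≤ π (Wcl ×ˢ s ∪ (Wcl ×ˢ Wcl)ᶜ) := measure_mono hsub
    _ ≤ π (Wcl ×ˢ s) + π ((Wcl ×ˢ Wcl)ᶜ) := measure_union_le _ _
    _ = π (Wcl ×ˢ s) := by rw [h0, add_zero]

/-- Two measures that agree on measurable subsets of `Wbd` give the same integral to
functions supported inside `Wbd`. -/
lemma integral_eq_of_agree_on_Wbd (κ ν : Measure P2)
    (h : ∀ s : Set P2, MeasurableSet s → s ⊆ Wbd → κ s = ν s)
    (f : P2 → ℝ) (hsupp : Function.support f ⊆ Wbd) :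
    ∫ x, f x ∂κ = ∫ x, f x ∂ν := by
  have hWm : MeasurableSet Wbd := isOpen_Wbd.measurableSet
  have hind : Wbd.indicator f = f := Set.indicator_eq_self.2 hsupp
  have hres : κ.restrict Wbd = ν.restrict Wbd := by
    ext s hs
    rw [Measure.restrict_apply hs, Measure.restrict_apply hs]
    exact h _ (hs.inter hWm) inter_subset_right
  calc ∫ x, f x ∂κ = ∫ x, Wbd.indicator f x ∂κ := by rw [hind]
    _ = ∫ x, f x ∂(κ.restrict Wbd) := integral_indicator hWm
    _ = ∫ x, f x ∂(ν.restrict Wbd) := by rw [hres]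
    _ = ∫ x, Wbd.indicator f x ∂ν := (integral_indicator hWm).symm
    _ = ∫ x, f x ∂ν := by rw [hind]

/-- For every `f ∈ C_c(W)`, the linear representation `μ ↦ ∫ f dμ` is
continuous on `(M^∞, OT_∞)`: if `OT_∞(μ_n, μ) → 0` then `∫ f dμ_n → ∫ f dμ`. -/
theorem linear_representation_continuous
    (f : P2 → ℝ) (hf : IsCcW f)
    (μ : Measure P2) (hμ : μ ∈ MInf)
    (u : ℕ → Measure P2) (hu : ∀ n, u n ∈ MInf)
    (hconv : Tendsto (fun n => OT (u n) μ) atTop (𝓝 0)) :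
    Tendsto (fun n => ∫ x, f x ∂(u n)) atTop (𝓝 (∫ x, f x ∂μ)) := by
  classical
  obtain ⟨hfc, hfcs, hfW⟩ := hf
  set K := tsupport f with hKdef
  have hKc : IsCompact K := hfcs
  have hKW : K ⊆ Wbd := hfW
  obtain ⟨r, hr, hrK⟩ := hKc.exists_cthickening_subset_open isOpen_Wbd hKW
  set K' := Metric.cthickening r K with hK'def
  have hK'c : IsCompact K' := hKc.cthickening
  have hK'W : K' ⊆ Wbd := hrK
  have hKK' : K ⊆ K' := Metric.self_subset_cthickening K
  -- lower bound on the distance to the diagonal on `K`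
  have hDiagne : Diag.Nonempty := ⟨(0, 0), rfl⟩
  have hdd : ∀ x ∈ K, r ≤ distDiag x := by
    intro x hx
    by_contra hcon
    push_neg at hcon
    obtain ⟨z, hz, hzd⟩ := (Metric.infDist_lt_iff hDiagne).1 hcon
    have hz' : z ∈ K' := Metric.mem_cthickening_of_dist_le z x r K hx (by rw [dist_comm]; exact hzd.le)
    have hzW : z ∈ Wbd := hK'W hz'
    have : z.1 = z.2 := hz
    exact absurd hzW (by simp [Wbd, this])
  have hμK' : μ K' < ⊤ := hμ.1.2.2.2 K' hK'W hK'c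
  set C : ℝ := (μ K').toReal with hCdef
  have hC : 0 ≤ C := ENNReal.toReal_nonneg
  -- a global bound on `f`
  obtain ⟨M, hM⟩ := hKc.exists_bound_of_continuousOn hfc.continuousOn
  have hMall : ∀ x, ‖f x‖ ≤ max M 0 := by
    intro x
    by_cases hx : x ∈ K
    · exact (hM x hx).trans (le_max_left _ _)
    · simp [image_eq_zero_of_notMem_tsupport hx]
  -- uniform continuity
  have hunif := Metric.uniformContinuous_iff.1
    (hfcs.uniformContinuous_of_continuous hfc)
  rw [Metric.tendsto_nhds]
  intro ε hε
  set ε' : ℝ := ε / (C + 1) with hε'def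
  have hC1 : (0:ℝ) < C + 1 := by linarith
  have hε' : 0 < ε' := div_pos hε hC1
  obtain ⟨η₀, hη₀, hηf⟩ := hunif ε' hε'
  set η := min η₀ r with hηdef
  have hη : 0 < η := lt_min hη₀ hr
  have hηr : η ≤ r := min_le_right _ _
  have hev := hconv.eventually_lt_const
    (show (0 : ℝ≥0∞) < ENNReal.ofReal η from ENNReal.ofReal_pos.2 hη)
  filter_upwards [hev] with n hn
  -- extract a coupling of small cost
  rw [OT] at hn
  obtain ⟨π, hπ⟩ := iInf_lt_iff.1 hn
  obtain ⟨hcpl, hcost⟩ := iInf_lt_iff.1 hπ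
  obtain ⟨hrad, h1marg, h2marg⟩ := hcpl
  have hπnull : π ((Wcl ×ˢ Wcl)ᶜ) = 0 := hrad.1
  -- a.e. points lie in the support of the plan
  have hspt : ∀ᵐ p ∂π, p ∈ msupport π := by
    rw [ae_iff]
    have : {p : P2 × P2 | ¬ p ∈ msupport π} = (msupport π)ᶜ := rfl
    rw [this]
    exact measure_compl_msupport π
  -- points in the support of the plan are moved at distance < η
  have hdW : ∀ p ∈ msupport π, dW p.1 p.2 < η := by
    intro p hp
    have h1 : ENNReal.ofReal (dW p.1 p.2) ≤ costInf π :=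
      le_iSup₂ (f := fun (p : P2 × P2) (_ : p ∈ msupport π) =>
        ENNReal.ofReal (dW p.1 p.2)) p hp
    have h2 := lt_of_le_of_lt h1 hcost
    rwa [ENNReal.ofReal_lt_ofReal_iff hη] at h2
  -- geometric key step
  have hgeo : ∀ p ∈ msupport π, (f p.1 ≠ 0 ∨ f p.2 ≠ 0) →
      p ∈ K' ×ˢ K' ∧ dist p.1 p.2 < η := by
    rintro ⟨x, y⟩ hp hne
    have hd : min (dist x y) (distDiag x + distDiag y) < η := hdW _ hp
    have hy0 : (0:ℝ) ≤ distDiag y := Metric.infDist_nonneg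
    have hx0 : (0:ℝ) ≤ distDiag x := Metric.infDist_nonneg
    rcases hne with h | h
    · have hx : x ∈ K := subset_tsupport f (Function.mem_support.2 h)
      have hxr : r ≤ distDiag x := hdd x hx
      have hdist : dist x y < η := by
        rcases min_lt_iff.1 hd with h' | h'
        · exact h'
        · exfalso; linarith
      refine ⟨⟨hKK' hx, ?_⟩, hdist⟩
      exact Metric.mem_cthickening_of_dist_le y x r K hx
        (by rw [dist_comm]; linarith)
    · have hy : y ∈ K := subset_tsupport f (Function.mem_support.2 h)
      have hyr : r ≤ distDiag y := hdd y hy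
      have hdist : dist x y < η := by
        rcases min_lt_iff.1 hd with h' | h'
        · exact h'
        · exfalso; linarith
      refine ⟨⟨?_, hKK' hy⟩, hdist⟩
      exact Metric.mem_cthickening_of_dist_le x y r K hy (by linarith)
  -- marginal identities for the integrals
  have hintfst : ∫ p, f p.1 ∂π = ∫ x, f x ∂(u n) := by
    have h1 : ∫ p, f p.1 ∂π = ∫ x, f x ∂(Measure.map Prod.fst π) :=
      (integral_map measurable_fst.aemeasurable hfc.aestronglyMeasurable).symm
    rw [h1]
    refine integral_eq_of_agree_on_Wbd _ _ ?_ f ((subset_tsupport f).trans hfW)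
    intro s hs hsW
    rw [Measure.map_apply measurable_fst hs]
    have hpre : Prod.fst ⁻¹' s = s ×ˢ (univ : Set P2) := by
      ext p; simp [Set.mem_prod]
    rw [hpre, measure_prod_univ_fst π hπnull s]
    exact h1marg s hsW hs
  have hintsnd : ∫ p, f p.2 ∂π = ∫ x, f x ∂μ := by
    have h1 : ∫ p, f p.2 ∂π = ∫ x, f x ∂(Measure.map Prod.snd π) :=
      (integral_map measurable_snd.aemeasurable hfc.aestronglyMeasurable).symm
    rw [h1]
    refine integral_eq_of_agree_on_Wbd _ _ ?_ f ((subset_tsupport f).trans hfW)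
    intro s hs hsW
    rw [Measure.map_apply measurable_snd hs]
    have hpre : Prod.snd ⁻¹' s = (univ : Set P2) ×ˢ s := by
      ext p; simp [Set.mem_prod]
    rw [hpre, measure_univ_prod_snd π hπnull s]
    exact h2marg s hsW hs
  -- integrability
  have hfinK : π (K ×ˢ (univ : Set P2)) < ⊤ := by
    rw [measure_prod_univ_fst π hπnull K, h1marg K hKW hKc.measurableSet]
    exact (hu n).1.2.2.2 K hKW hKc
  have hfinK2 : π ((univ : Set P2) ×ˢ K) < ⊤ := by
    rw [measure_univ_prod_snd π hπnull K, h2marg K hKW hKc.measurableSet]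
    exact hμ.1.2.2.2 K hKW hKc
  have hbnd1 : Integrable ((K ×ˢ (univ : Set P2)).indicator fun _ => max M 0) π :=
    (integrable_indicator_iff (hKc.measurableSet.prod MeasurableSet.univ)).2
      (integrableOn_const hfinK.ne)
  have hbnd2 : Integrable (((univ : Set P2) ×ˢ K).indicator fun _ => max M 0) π :=
    (integrable_indicator_iff (MeasurableSet.univ.prod hKc.measurableSet)).2
      (integrableOn_const hfinK2.ne)
  have hint1 : Integrable (fun p : P2 × P2 => f p.1) π := by
    refine hbnd1.mono' (hfc.comp continuous_fst).aestronglyMeasurable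
      (ae_of_all _ fun p => ?_)
    by_cases hp : p.1 ∈ K
    · have hmem : p ∈ K ×ˢ (univ : Set P2) := ⟨hp, mem_univ _⟩
      rw [Set.indicator_of_mem hmem]
      exact hMall p.1
    · rw [Set.indicator_of_notMem (fun hc => hp hc.1)]
      simp [image_eq_zero_of_notMem_tsupport hp]
  have hint2 : Integrable (fun p : P2 × P2 => f p.2) π := by
    refine hbnd2.mono' (hfc.comp continuous_snd).aestronglyMeasurable
      (ae_of_all _ fun p => ?_)
    by_cases hp : p.2 ∈ K
    · have hmem : p ∈ (univ : Set P2) ×ˢ K := ⟨mem_univ _, hp⟩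
      rw [Set.indicator_of_mem hmem]
      exact hMall p.2
    · rw [Set.indicator_of_notMem (fun hc => hp hc.2)]
      simp [image_eq_zero_of_notMem_tsupport hp]
  -- the pointwise bound on the difference
  have hbd : ∀ᵐ p ∂π, ‖f p.1 - f p.2‖ ≤ (K' ×ˢ K').indicator (fun _ => ε') p := by
    filter_upwards [hspt] with p hp
    by_cases hne : f p.1 = 0 ∧ f p.2 = 0
    · rw [hne.1, hne.2, sub_zero, norm_zero]
      exact Set.indicator_nonneg (fun _ _ => hε'.le) p
    · obtain ⟨hmem, hdist⟩ := hgeo p hp (not_and_or.1 hne)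
      rw [Set.indicator_of_mem hmem]
      have h2 := hηf (lt_of_lt_of_le hdist (min_le_left _ _))
      rw [Real.dist_eq] at h2
      exact le_of_lt (by simpa [Real.norm_eq_abs] using h2)
  have hπK' : π (K' ×ˢ K') ≤ μ K' := by
    calc π (K' ×ˢ K') ≤ π ((univ : Set P2) ×ˢ K') :=
          measure_mono (Set.prod_mono_left (subset_univ _))
      _ = π (Wcl ×ˢ K') := measure_univ_prod_snd π hπnull K'
      _ = μ K' := h2marg K' hK'W hK'c.measurableSet
  have hK'm : MeasurableSet (K' ×ˢ K') := hK'c.measurableSet.prod hK'c.measurableSet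
  have hbound_int : Integrable ((K' ×ˢ K').indicator fun _ => ε') π :=
    (integrable_indicator_iff hK'm).2
      (integrableOn_const (lt_of_le_of_lt hπK' hμK').ne)
  -- assemble the estimate
  have hdiff : ∫ x, f x ∂(u n) - ∫ x, f x ∂μ = ∫ p, (f p.1 - f p.2) ∂π := by
    rw [← hintfst, ← hintsnd, ← integral_sub hint1 hint2]
  have hnorm : ‖∫ p, (f p.1 - f p.2) ∂π‖ ≤
      ∫ p, (K' ×ˢ K').indicator (fun _ => ε') p ∂π :=
    norm_integral_le_of_norm_le hbound_int hbd
  have hintind : ∫ p, (K' ×ˢ K').indicator (fun _ => ε') p ∂π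
      = (π (K' ×ˢ K')).toReal * ε' := by
    rw [integral_indicator_const (e := ε') hK'm, smul_eq_mul, measureReal_def]
  have htoReal : (π (K' ×ˢ K')).toReal ≤ C :=
    ENNReal.toReal_mono hμK'.ne hπK'
  have hfinal : ‖∫ x, f x ∂(u n) - ∫ x, f x ∂μ‖ ≤ C * ε' := by
    rw [hdiff]
    refine hnorm.trans ?_
    rw [hintind]
    exact mul_le_mul_of_nonneg_right htoReal hε'.le
  rw [Real.dist_eq, ← Real.norm_eq_abs]
  refine lt_of_le_of_lt hfinal ?_
  have h1 : ε' * (C + 1) = ε := div_mul_cancel₀ ε hC1.ne'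
  nlinarith [hε', hC]
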